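/- arXiv:1011.3032 — 6 statements merged into one kernel-verified Lean document; each statement's English description precedes it below -/
import Mathlib

section
/- Let Γ be a finite oriented cycle-free graph and let γ be a covering subgraph of Γ, given by a partition of the vertex set into connected subsets P_1, ..., P_n. If the contracted graph Γ/γ (obtained by shrinking each P_j to a single vertex) is cycle-free, then each P_j is a convex subset of the poset of vertices of Γ, i.e. if v, w ∈ P_j and v ≤ u ≤ w in the path-order, then u ∈ P_j. -/
universe u v

variable {V : Type u} {E : Type v}

/-- One directed step along an edge of the oriented graph `(src, tgt)`. -/
def Step (src tgt : E → V) (a b : V) : Prop := ∃ e, src e = a ∧ tgt e = b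

/-- Strict path order: there is a nonempty directed path from `a` to `b`. -/
def PathLt (src tgt : E → V) : V → V → Prop := Relation.TransGen (Step src tgt)

/-- Weak path order: there is a (possibly empty) directed path from `a` to `b`. -/
def PathLe (src tgt : E → V) : V → V → Prop := Relation.ReflTransGen (Step src tgt)

/-- The graph is cycle-free: no nonempty directed path from a vertex to itself. -/
def CycleFree (src tgt : E → V) : Prop := ∀ x, ¬ PathLt src tgt x x

/-- Undirected step inside the vertex subset `P` (edge traversed forwards or backwards,
with both endpoints in `P`). -/
def UStepIn (src tgt : E → V) (P : Set V) (a b : V) : Prop :=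
  a ∈ P ∧ b ∈ P ∧ ∃ e, (src e = a ∧ tgt e = b) ∨ (src e = b ∧ tgt e = a)

/-- `P` induces a connected subgraph: any two of its vertices are joined by a walk
inside `P`. -/
def ConnSet (src tgt : E → V) (P : Set V) : Prop :=
  ∀ v ∈ P, ∀ w ∈ P, Relation.ReflTransGen (UStepIn src tgt P) v w

/-- A covering subgraph: a partition (setoid) of the vertex set all of whose blocks
induce connected subgraphs. -/
def CoveringSetoid (src tgt : E → V) (s : Setoid V) : Prop :=
  ∀ v : V, ConnSet src tgt {w | s.r v w}

/-- Edges of the contracted graph `Γ/s`: edges of `Γ` joining distinct blocks. -/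
def CEdge (src tgt : E → V) (s : Setoid V) : Type v := {e : E // ¬ s.r (src e) (tgt e)}

/-- Source map of the contracted graph. -/
def csrc (src tgt : E → V) (s : Setoid V) (e : CEdge src tgt s) : Quotient s :=
  Quotient.mk s (src e.1)

/-- Target map of the contracted graph. -/
def ctgt (src tgt : E → V) (s : Setoid V) (e : CEdge src tgt s) : Quotient s :=
  Quotient.mk s (tgt e.1)

/-- Edges of the induced subgraph `Γ(P)`: edges with both endpoints in `P`. -/
def IEdge (src tgt : E → V) (P : Set V) : Type v := {e : E // src e ∈ P ∧ tgt e ∈ P}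

/-- Source map of the induced subgraph. -/
def isrc (src tgt : E → V) (P : Set V) (e : IEdge src tgt P) : P := ⟨src e.1, e.2.1⟩

/-- Target map of the induced subgraph. -/
def itgt (src tgt : E → V) (P : Set V) (e : IEdge src tgt P) : P := ⟨tgt e.1, e.2.2⟩

/-- `A < B` for vertex subsets: every comparable pair `a ∈ A`, `b ∈ B` satisfies `a < b`. -/
def SetLt (src tgt : E → V) (A B : Set V) : Prop :=
  ∀ a ∈ A, ∀ b ∈ B, (PathLt src tgt a b ∨ PathLt src tgt b a) → PathLt src tgt a b

/-- Admissible cut `(V₁, V₂)` of the graph: a partition of the vertex set into two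
pieces with `V₂ < V₁`. -/
def AdmCut (src tgt : E → V) (V1 V2 : Set V) : Prop :=
  Disjoint V1 V2 ∧ V1 ∪ V2 = Set.univ ∧ SetLt src tgt V2 V1

/-- Directed step staying inside `P` (path order of the induced subgraph). -/
def StepIn (src tgt : E → V) (P : Set V) (a b : V) : Prop :=
  a ∈ P ∧ b ∈ P ∧ ∃ e, src e = a ∧ tgt e = b

/-- Strict path order of the subgraph induced on `P`. -/
def PathLtIn (src tgt : E → V) (P : Set V) : V → V → Prop :=
  Relation.TransGen (StepIn src tgt P)

/-- `A < B` relative to the induced subgraph on `P`. -/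
def SetLtIn (src tgt : E → V) (P A B : Set V) : Prop :=
  ∀ a ∈ A, ∀ b ∈ B, (PathLtIn src tgt P a b ∨ PathLtIn src tgt P b a) →
    PathLtIn src tgt P a b

/-- Admissible cut `(V₁, V₂)` of the subgraph of `Γ` induced on `P`. -/
def AdmCutIn (src tgt : E → V) (P V1 V2 : Set V) : Prop :=
  V1 ⊆ P ∧ V2 ⊆ P ∧ Disjoint V1 V2 ∧ V1 ∪ V2 = P ∧ SetLtIn src tgt P V2 V1

/-- Isomorphism of oriented graphs. -/
def GIso {V1 E1 V2 E2 : Type*} (src1 tgt1 : E1 → V1) (src2 tgt2 : E2 → V2) : Prop :=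
  ∃ (f : V1 ≃ V2) (g : E1 ≃ E2),
    (∀ e, f (src1 e) = src2 (g e)) ∧ ∀ e, f (tgt1 e) = tgt2 (g e)

/-- if `Γ` is cycle-free and the contraction along a covering
subgraph `s` is cycle-free, then every block of `s` is convex for the path order. -/
theorem stmt1 [Fintype V] [Fintype E] (src tgt : E → V) (hΓ : CycleFree src tgt)
    (s : Setoid V) (hs : CoveringSetoid src tgt s)
    (hc : CycleFree (csrc src tgt s) (ctgt src tgt s)) :
    ∀ v u w : V, s.r v w → PathLe src tgt v u → PathLe src tgt u w → s.r v u := by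
  have proj : ∀ a b : V, PathLe src tgt a b →
      Relation.ReflTransGen (Step (csrc src tgt s) (ctgt src tgt s))
        (Quotient.mk s a) (Quotient.mk s b) := by
    intro a b h
    induction h with
    | refl => exact Relation.ReflTransGen.refl
    | tail _ hstep ih =>
      obtain ⟨e, he1, he2⟩ := hstep
      by_cases hr : s.r (src e) (tgt e)
      · have : (Quotient.mk s _ : Quotient s) = Quotient.mk s _ := Quotient.sound hr
        rw [he1, he2] at this
        exact this ▸ ih
      · exact ih.tail ⟨⟨e, hr⟩, by simp [csrc, ctgt, he1, he2]⟩
  intro v u w hvw h1 h2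
  have q1 := proj v u h1
  have q2 := proj u w h2
  have hwv : (Quotient.mk s w : Quotient s) = Quotient.mk s v := Quotient.sound (s.symm hvw)
  rw [hwv] at q2
  by_contra hne
  have hne' : (Quotient.mk s v : Quotient s) ≠ Quotient.mk s u := fun h =>
    hne (Quotient.exact h)
  rcases (Relation.reflTransGen_iff_eq_or_transGen.mp q1) with h | h
  · exact hne' h.symm
  rcases (Relation.reflTransGen_iff_eq_or_transGen.mp q2) with h' | h'
  · exact hne' h'
  exact hc _ (h.trans h')
end

section
/- There exists a finite oriented cycle-free graph Γ and a covering subgraph γ of Γ such that every block of the associated partition is a convex connected subset of the vertex poset, yet the contracted graph Γ/γ contains a directed cycle. (I.e., the converse of the convexity criterion fails.) -/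
universe u v

variable {V : Type u} {E : Type v}

namespace Hexagon

def hsrc : Fin 6 → Fin 6 := ![0, 2, 2, 4, 4, 0]
def htgt : Fin 6 → Fin 6 := ![1, 1, 3, 3, 5, 5]

def hr (v w : Fin 6) : Prop := v.val / 2 = w.val / 2

instance (v w : Fin 6) : Decidable (hr v w) := by unfold hr; infer_instance

def hsetoid : Setoid (Fin 6) :=
  ⟨hr, ⟨fun _ => rfl, fun h => h.symm, fun h1 h2 => h1.trans h2⟩⟩

instance (v w : Fin 6) : Decidable (hsetoid.r v w) := inferInstanceAs (Decidable (hr v w))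

lemma parity (e : Fin 6) : (hsrc e).val % 2 = 0 ∧ (htgt e).val % 2 = 1 := by
  fin_cases e <;> decide

lemma step_parity {a b : Fin 6} (h : Step hsrc htgt a b) :
    a.val % 2 = 0 ∧ b.val % 2 = 1 := by
  obtain ⟨e, he1, he2⟩ := h
  have := parity e
  rw [he1, he2] at this
  exact this

lemma rtg_odd {b c : Fin 6} (hb : b.val % 2 = 1)
    (h : Relation.ReflTransGen (Step hsrc htgt) b c) : b = c := by
  induction h using Relation.ReflTransGen.head_induction_on with
  | refl => rfl
  | head hst _ _ => exact absurd (step_parity hst).1 (by omega)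

lemma tg_odd {b c : Fin 6} (h : Relation.TransGen (Step hsrc htgt) b c) :
    c.val % 2 = 1 := by
  induction h with
  | single hst => exact (step_parity hst).2
  | tail _ hst _ => exact (step_parity hst).2

lemma cyclefree : CycleFree hsrc htgt := by
  intro x hx
  cases hx with
  | single hst =>
      have := step_parity hst; omega
  | tail htg hst =>
      have h1 := tg_odd htg
      have h2 := (step_parity hst).1
      omega

lemma convex : ∀ v u w : Fin 6, hsetoid.r v w → PathLe hsrc htgt v u →
    PathLe hsrc htgt u w → hsetoid.r v u := by
  intro v u w hvw hvu huw
  cases (Relation.reflTransGen_iff_eq_or_transGen ..).1 hvu with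
  | inl h => rw [h]
  | inr h =>
      have hu : u.val % 2 = 1 := tg_odd h
      have : u = w := rtg_odd hu huw
      rw [this]; exact hvw

lemma ustep (v a b : Fin 6) (ha : hr v a) (hb : hr v b) (hne : a ≠ b) :
    UStepIn hsrc htgt {x | hr v x} a b := by
  refine ⟨ha, hb, ?_⟩
  fin_cases v <;> fin_cases a <;> fin_cases b <;> simp_all [hr] <;>
    first
      | exact ⟨0, Or.inl ⟨rfl, rfl⟩⟩
      | exact ⟨0, Or.inr ⟨rfl, rfl⟩⟩
      | exact ⟨2, Or.inl ⟨rfl, rfl⟩⟩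
      | exact ⟨2, Or.inr ⟨rfl, rfl⟩⟩
      | exact ⟨4, Or.inl ⟨rfl, rfl⟩⟩
      | exact ⟨4, Or.inr ⟨rfl, rfl⟩⟩

lemma covering : CoveringSetoid hsrc htgt hsetoid := by
  intro v a ha b hb
  by_cases hab : a = b
  · rw [hab]
  · exact Relation.ReflTransGen.single (ustep v a b ha hb hab)

lemma notr (e : Fin 6) (he : e = 1 ∨ e = 3 ∨ e = 5) :
    ¬ hsetoid.r (hsrc e) (htgt e) := by
  rcases he with h | h | h <;> subst h <;> decide

lemma contracted_cycle :
    ¬ CycleFree (csrc hsrc htgt hsetoid) (ctgt hsrc htgt hsetoid) := by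
  intro h
  apply h (Quotient.mk hsetoid 0)
  have s1 : Step (csrc hsrc htgt hsetoid) (ctgt hsrc htgt hsetoid)
      (Quotient.mk hsetoid 0) (Quotient.mk hsetoid 4) :=
    ⟨⟨5, notr 5 (by simp)⟩, rfl, Quotient.sound (show hr 5 4 by decide)⟩
  have s2 : Step (csrc hsrc htgt hsetoid) (ctgt hsrc htgt hsetoid)
      (Quotient.mk hsetoid 4) (Quotient.mk hsetoid 2) :=
    ⟨⟨3, notr 3 (by simp)⟩, rfl, Quotient.sound (show hr 3 2 by decide)⟩
  have s3 : Step (csrc hsrc htgt hsetoid) (ctgt hsrc htgt hsetoid)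
      (Quotient.mk hsetoid 2) (Quotient.mk hsetoid 0) :=
    ⟨⟨1, notr 1 (by simp)⟩, rfl, Quotient.sound (show hr 1 0 by decide)⟩
  exact (Relation.TransGen.single s1).tail s2 |>.tail s3

end Hexagon

/-- the converse of the convexity criterion fails: there is a finite
cycle-free oriented graph and a covering subgraph with all blocks convex (and
connected), whose contraction has a directed cycle. -/



theorem stmt2 : ∃ (V E : Type) (_ : Fintype V) (_ : Fintype E)
    (src tgt : E → V) (s : Setoid V),
    CycleFree src tgt ∧ CoveringSetoid src tgt s ∧
    (∀ v u w : V, s.r v w → PathLe src tgt v u → PathLe src tgt u w → s.r v u) ∧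
    ¬ CycleFree (csrc src tgt s) (ctgt src tgt s) := by
  exact ⟨Fin 6, Fin 6, inferInstance, inferInstance, Hexagon.hsrc, Hexagon.htgt,
    Hexagon.hsetoid, Hexagon.cyclefree, Hexagon.covering, Hexagon.convex,
    Hexagon.contracted_cycle⟩
end

section
/- Let Γ be a finite oriented cycle-free graph. Then the admissible-cut coproduct Δ_c, defined on a graph by Δ_c(Γ) = Σ Γ(V_1) ⊗ Γ(V_2) over all ordered pairs (V_1, V_2) of disjoint subsets with V_1 ⊔ V_2 = V(Γ) and V_2 < V_1, is coassociative: (Δ_c ⊗ I)Δ_c(Γ) = (I ⊗ Δ_c)Δ_c(Γ), and both equal Σ Γ(V_1) ⊗ Γ(V_2) ⊗ Γ(V_3) over triples with V_3 < V_2 < V_1 (meaning V_3 < V_2, V_2 < V_1, and V_3 < V_1). -/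
universe u v

variable {V : Type u} {E : Type v}

lemma pathLtIn_imp {src tgt : E → V} {P : Set V} {a b : V}
    (h : PathLtIn src tgt P a b) : PathLt src tgt a b :=
  Relation.TransGen.mono (fun _ _ hs => hs.2.2 : ∀ x y, StepIn src tgt P x y → Step src tgt x y) _ _ h

lemma pathLtIn_univ {src tgt : E → V} {a b : V} :
    PathLtIn src tgt Set.univ a b ↔ PathLt src tgt a b :=
  ⟨pathLtIn_imp, fun h => Relation.TransGen.mono (fun _ _ hs => ⟨trivial, trivial, hs⟩ :
    ∀ x y, Step src tgt x y → StepIn src tgt Set.univ x y) _ _ h⟩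

lemma setLtIn_univ {src tgt : E → V} {A B : Set V} :
    SetLtIn src tgt Set.univ A B ↔ SetLt src tgt A B := by
  unfold SetLtIn SetLt
  simp only [pathLtIn_univ]

/-- If the complement `Q` of `P` satisfies `Q < P`, any path between vertices of `P`
stays in `P`. -/
lemma key1 {src tgt : E → V} (h : CycleFree src tgt) {P Q : Set V}
    (hlt : SetLt src tgt Q P) (hcov : ∀ x, x ∉ P → x ∈ Q) {a b : V}
    (ha : a ∈ P) (hp : PathLt src tgt a b) : b ∈ P → PathLtIn src tgt P a b := by
  induction hp with
  | single hs => exact fun hb => Relation.TransGen.single ⟨ha, hb, hs⟩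
  | @tail c d hp hs ih =>
    intro hd
    have hcP : c ∈ P := by
      by_contra hc
      exact h _ (hp.trans (hlt _ (hcov _ hc) _ ha (Or.inr hp)))
    exact (ih hcP).tail ⟨hcP, hd, hs⟩

/-- If the complement `Q` of `P` satisfies `P < Q`, any path between vertices of `P`
stays in `P`. -/
lemma key2 {src tgt : E → V} (h : CycleFree src tgt) {P Q : Set V}
    (hlt : SetLt src tgt P Q) (hcov : ∀ x, x ∉ P → x ∈ Q) {a b : V}
    (ha : a ∈ P) (hp : PathLt src tgt a b) : b ∈ P → PathLtIn src tgt P a b := by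
  induction hp with
  | single hs => exact fun hb => Relation.TransGen.single ⟨ha, hb, hs⟩
  | @tail c d hp hs ih =>
    intro hd
    have hcP : c ∈ P := by
      by_contra hc
      have hcd : PathLt src tgt c d := Relation.TransGen.single hs
      exact h _ (hcd.trans (hlt _ hd _ (hcov _ hc) (Or.inr hcd)))
    exact (ih hcP).tail ⟨hcP, hd, hs⟩

lemma setLtIn_iff {src tgt : E → V} {P A B : Set V}
    (hkey : ∀ {a b : V}, a ∈ P → PathLt src tgt a b → b ∈ P → PathLtIn src tgt P a b)
    (hA : A ⊆ P) (hB : B ⊆ P) : SetLtIn src tgt P A B ↔ SetLt src tgt A B := by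
  constructor
  · intro hlt a ha b hb hc
    refine pathLtIn_imp (hlt a ha b hb ?_)
    rcases hc with hc | hc
    · exact Or.inl (hkey (hA ha) hc (hB hb))
    · exact Or.inr (hkey (hB hb) hc (hA ha))
  · intro hlt a ha b hb hc
    have hc' : PathLt src tgt a b ∨ PathLt src tgt b a :=
      hc.imp pathLtIn_imp pathLtIn_imp
    exact hkey (hA ha) (hlt a ha b hb hc') (hB hb)

lemma forwardL {src tgt : E → V} (h : CycleFree src tgt) {V1 V2 W1 W2 : Set V}
    (h1 : AdmCutIn src tgt Set.univ V1 V2) (h2 : AdmCutIn src tgt V1 W1 W2) :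
    Disjoint W1 W2 ∧ Disjoint W1 V2 ∧ Disjoint W2 V2 ∧ W1 ∪ W2 ∪ V2 = Set.univ ∧
    SetLt src tgt V2 W2 ∧ SetLt src tgt W2 W1 ∧ SetLt src tgt V2 W1 := by
  obtain ⟨-, -, hdis, huniv, hlt⟩ := h1
  rw [setLtIn_univ] at hlt
  obtain ⟨hW1, hW2, hdisW, hunionW, hltW⟩ := h2
  have hcov : ∀ x, x ∉ V1 → x ∈ V2 := by
    intro x hx
    have hx2 : x ∈ V1 ∪ V2 := by rw [huniv]; trivial
    exact hx2.resolve_left hx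
  have hkey : ∀ {a b : V}, a ∈ V1 → PathLt src tgt a b → b ∈ V1 →
      PathLtIn src tgt V1 a b := fun ha hp hb => key1 h hlt hcov ha hp hb
  refine ⟨hdisW, hdis.mono_left hW1, hdis.mono_left hW2, ?_,
    fun a ha b hb hc => hlt a ha b (hW2 hb) hc,
    (setLtIn_iff hkey hW2 hW1).mp hltW,
    fun a ha b hb hc => hlt a ha b (hW1 hb) hc⟩
  rw [hunionW]; exact huniv

lemma backwardL {src tgt : E → V} (h : CycleFree src tgt) {A B C : Set V}
    (hd1 : Disjoint A B) (hd2 : Disjoint A C) (hd3 : Disjoint B C)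
    (hu : A ∪ B ∪ C = Set.univ) (h32 : SetLt src tgt C B) (h21 : SetLt src tgt B A)
    (h31 : SetLt src tgt C A) :
    AdmCutIn src tgt Set.univ (A ∪ B) C ∧ AdmCutIn src tgt (A ∪ B) A B := by
  have hltC : SetLt src tgt C (A ∪ B) := by
    intro c hc x hx hcomp
    rcases hx with hx | hx
    · exact h31 c hc x hx hcomp
    · exact h32 c hc x hx hcomp
  have hcov : ∀ x, x ∉ A ∪ B → x ∈ C := by
    intro x hx
    have hx2 : x ∈ A ∪ B ∪ C := by rw [hu]; trivial
    exact hx2.resolve_left hx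
  have hkey : ∀ {a b : V}, a ∈ A ∪ B → PathLt src tgt a b → b ∈ A ∪ B →
      PathLtIn src tgt (A ∪ B) a b := fun ha hp hb => key1 h hltC hcov ha hp hb
  exact ⟨⟨Set.subset_univ _, Set.subset_univ _, Set.disjoint_union_left.mpr ⟨hd2, hd3⟩,
      hu, setLtIn_univ.mpr hltC⟩,
    ⟨Set.subset_union_left, Set.subset_union_right, hd1, rfl,
      (setLtIn_iff hkey Set.subset_union_right Set.subset_union_left).mpr h21⟩⟩

lemma forwardR {src tgt : E → V} (h : CycleFree src tgt) {V1 V2 W1 W2 : Set V}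
    (h1 : AdmCutIn src tgt Set.univ V1 V2) (h2 : AdmCutIn src tgt V2 W1 W2) :
    Disjoint V1 W1 ∧ Disjoint V1 W2 ∧ Disjoint W1 W2 ∧ V1 ∪ W1 ∪ W2 = Set.univ ∧
    SetLt src tgt W2 W1 ∧ SetLt src tgt W1 V1 ∧ SetLt src tgt W2 V1 := by
  obtain ⟨-, -, hdis, huniv, hlt⟩ := h1
  rw [setLtIn_univ] at hlt
  obtain ⟨hW1, hW2, hdisW, hunionW, hltW⟩ := h2
  have hcov : ∀ x, x ∉ V2 → x ∈ V1 := by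
    intro x hx
    have hx2 : x ∈ V1 ∪ V2 := by rw [huniv]; trivial
    exact hx2.resolve_right hx
  have hkey : ∀ {a b : V}, a ∈ V2 → PathLt src tgt a b → b ∈ V2 →
      PathLtIn src tgt V2 a b := fun ha hp hb => key2 h hlt hcov ha hp hb
  refine ⟨hdis.mono_right hW1, hdis.mono_right hW2, hdisW, ?_,
    (setLtIn_iff hkey hW2 hW1).mp hltW,
    fun a ha b hb hc => hlt a (hW1 ha) b hb hc,
    fun a ha b hb hc => hlt a (hW2 ha) b hb hc⟩
  rw [Set.union_assoc, hunionW]; exact huniv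

lemma backwardR {src tgt : E → V} (h : CycleFree src tgt) {A B C : Set V}
    (hd1 : Disjoint A B) (hd2 : Disjoint A C) (hd3 : Disjoint B C)
    (hu : A ∪ B ∪ C = Set.univ) (h32 : SetLt src tgt C B) (h21 : SetLt src tgt B A)
    (h31 : SetLt src tgt C A) :
    AdmCutIn src tgt Set.univ A (B ∪ C) ∧ AdmCutIn src tgt (B ∪ C) B C := by
  have hltA : SetLt src tgt (B ∪ C) A := by
    intro x hx a ha hcomp
    rcases hx with hx | hx
    · exact h21 x hx a ha hcomp
    · exact h31 x hx a ha hcomp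
  have hcov : ∀ x, x ∉ B ∪ C → x ∈ A := by
    intro x hx
    have hx2 : x ∈ A ∪ B ∪ C := by rw [hu]; trivial
    rw [Set.union_assoc] at hx2
    exact hx2.resolve_right hx
  have hkey : ∀ {a b : V}, a ∈ B ∪ C → PathLt src tgt a b → b ∈ B ∪ C →
      PathLtIn src tgt (B ∪ C) a b := fun ha hp hb => key2 h hltA hcov ha hp hb
  exact ⟨⟨Set.subset_univ _, Set.subset_univ _, Set.disjoint_union_right.mpr ⟨hd1, hd2⟩,
      by rw [← Set.union_assoc]; exact hu, setLtIn_univ.mpr hltA⟩,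
    ⟨Set.subset_union_left, Set.subset_union_right, hd3, rfl,
      (setLtIn_iff hkey Set.subset_union_right Set.subset_union_left).mpr h32⟩⟩

/-- coassociativity of the admissible-cut coproduct `Δ_c`, stated as
bijections between the index sets of the two iterated sums and the set of triples
`(V₁,V₂,V₃)` with `V₃ < V₂ < V₁` (meaning `V₃ < V₂`, `V₂ < V₁` and `V₃ < V₁`),
preserving the resulting tensors (i.e. the vertex sets of the induced subgraphs). -/
theorem stmt10 [Fintype V] [Fintype E] (src tgt : E → V) (h : CycleFree src tgt) :
    ∃ (eL : {p : (Set V × Set V) × (Set V × Set V) //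
        AdmCutIn src tgt Set.univ p.1.1 p.1.2 ∧
        AdmCutIn src tgt p.1.1 p.2.1 p.2.2} ≃
      {t : Set V × Set V × Set V //
        Disjoint t.1 t.2.1 ∧ Disjoint t.1 t.2.2 ∧ Disjoint t.2.1 t.2.2 ∧
        t.1 ∪ t.2.1 ∪ t.2.2 = Set.univ ∧
        SetLt src tgt t.2.2 t.2.1 ∧ SetLt src tgt t.2.1 t.1 ∧
        SetLt src tgt t.2.2 t.1})
      (eR : {p : (Set V × Set V) × (Set V × Set V) //
        AdmCutIn src tgt Set.univ p.1.1 p.1.2 ∧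
        AdmCutIn src tgt p.1.2 p.2.1 p.2.2} ≃
      {t : Set V × Set V × Set V //
        Disjoint t.1 t.2.1 ∧ Disjoint t.1 t.2.2 ∧ Disjoint t.2.1 t.2.2 ∧
        t.1 ∪ t.2.1 ∪ t.2.2 = Set.univ ∧
        SetLt src tgt t.2.2 t.2.1 ∧ SetLt src tgt t.2.1 t.1 ∧
        SetLt src tgt t.2.2 t.1}),
      (∀ p, (eL p).1 = (p.1.2.1, p.1.2.2, p.1.1.2)) ∧
      (∀ p, (eR p).1 = (p.1.1.1, p.1.2.1, p.1.2.2)) := by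
  refine ⟨⟨fun p => ⟨(p.1.2.1, p.1.2.2, p.1.1.2), forwardL h p.2.1 p.2.2⟩,
      fun t => ⟨((t.1.1 ∪ t.1.2.1, t.1.2.2), (t.1.1, t.1.2.1)),
        backwardL h t.2.1 t.2.2.1 t.2.2.2.1 t.2.2.2.2.1 t.2.2.2.2.2.1
          t.2.2.2.2.2.2.1 t.2.2.2.2.2.2.2⟩,
      fun p => Subtype.ext ?_, fun t => Subtype.ext rfl⟩,
    ⟨fun p => ⟨(p.1.1.1, p.1.2.1, p.1.2.2), forwardR h p.2.1 p.2.2⟩,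
      fun t => ⟨((t.1.1, t.1.2.1 ∪ t.1.2.2), (t.1.2.1, t.1.2.2)),
        backwardR h t.2.1 t.2.2.1 t.2.2.2.1 t.2.2.2.2.1 t.2.2.2.2.2.1
          t.2.2.2.2.2.2.1 t.2.2.2.2.2.2.2⟩,
      fun p => Subtype.ext ?_, fun t => Subtype.ext rfl⟩,
    fun p => rfl, fun p => rfl⟩
  · show ((p.1.2.1 ∪ p.1.2.2, p.1.1.2), (p.1.2.1, p.1.2.2)) = p.1
    rw [show p.1.2.1 ∪ p.1.2.2 = p.1.1.1 from p.2.2.2.2.2.1]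
  · show ((p.1.1.1, p.1.2.1 ∪ p.1.2.2), (p.1.2.1, p.1.2.2)) = p.1
    rw [show p.1.2.1 ∪ p.1.2.2 = p.1.1.2 from p.2.2.2.2.2.1]
end

section
/- Let Γ be a finite oriented cycle-free graph, γ a poset-compatible covering subgraph (i.e. Γ/γ is cycle-free), and V(Γ/γ) = U_1 ⊔ U_2 an admissible cut of the contracted graph (U_2 < U_1 in the path-order of Γ/γ). Let V_i ⊆ V(Γ) be the union of the blocks of γ belonging to U_i. Then V(Γ) = V_1 ⊔ V_2 is an admissible cut of Γ, i.e. V_2 < V_1 in the path-order of Γ. -/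
universe u v

variable {V : Type u} {E : Type v}

lemma step_quot' (src tgt : E → V) (s : Setoid V) {x y : V} (hxy : Step src tgt x y) :
    Relation.ReflTransGen (Step (csrc src tgt s) (ctgt src tgt s))
      (Quotient.mk s x) (Quotient.mk s y) := by
  obtain ⟨e, he1, he2⟩ := hxy
  subst he1; subst he2
  by_cases hr : s.r (src e) (tgt e)
  · rw [Quotient.sound hr]
  · exact Relation.ReflTransGen.single ⟨⟨e, hr⟩, rfl, rfl⟩

lemma pathLt_quot' (src tgt : E → V) (s : Setoid V) {x y : V} (hxy : PathLt src tgt x y) :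
    Relation.ReflTransGen (Step (csrc src tgt s) (ctgt src tgt s))
      (Quotient.mk s x) (Quotient.mk s y) := by
  induction hxy with
  | single h1 => exact step_quot' src tgt s h1
  | tail _ h1 ih => exact ih.trans (step_quot' src tgt s h1)

/-- pulling back an admissible cut of `Γ/γ` along a poset-compatible
covering subgraph `γ` gives an admissible cut of `Γ`. -/
theorem stmt12 [Fintype V] [Fintype E] (src tgt : E → V) (h : CycleFree src tgt)
    (s : Setoid V) (hs : CoveringSetoid src tgt s)
    (hpc : CycleFree (csrc src tgt s) (ctgt src tgt s))
    (U1 U2 : Set (Quotient s))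
    (hcut : AdmCut (csrc src tgt s) (ctgt src tgt s) U1 U2) :
    AdmCut src tgt {v | Quotient.mk s v ∈ U1} {v | Quotient.mk s v ∈ U2} := by
  obtain ⟨hdisj, huniv, hlt⟩ := hcut
  refine ⟨?_, ?_, ?_⟩
  · rw [Set.disjoint_left] at hdisj ⊢
    intro v h1 h2
    exact hdisj h1 h2
  · ext v
    simp only [Set.mem_union, Set.mem_setOf_eq, Set.mem_univ, iff_true]
    have : Quotient.mk s v ∈ U1 ∪ U2 := huniv ▸ Set.mem_univ _
    exact this
  · intro a ha b hb hcomp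
    rcases hcomp with h1 | h2
    · exact h1
    · exfalso
      have hq := pathLt_quot' src tgt s h2
      have hne : Quotient.mk s b ≠ Quotient.mk s a := by
        intro heq
        exact Set.disjoint_left.mp hdisj hb (heq ▸ ha)
      have hqt : PathLt (csrc src tgt s) (ctgt src tgt s)
          (Quotient.mk s b) (Quotient.mk s a) :=
        (Relation.reflTransGen_iff_eq_or_transGen.mp hq).resolve_left
          (fun heq => hne heq.symm)
      have := hlt (Quotient.mk s a) ha (Quotient.mk s b) hb (Or.inr hqt)
      exact hpc _ (this.trans hqt)
end

section
/- Let Γ be a finite oriented cycle-free graph. There is a bijection between: (a) pairs (γ, (U_1,U_2)) where γ is a poset-compatible covering subgraph of Γ and (U_1,U_2) is an admissible cut of Γ/γ; and (b) pairs ((V_1,V_2), (γ', γ'')) where (V_1,V_2) is an admissible cut of Γ, γ' is a poset-compatible covering subgraph of Γ(V_1), and γ'' is a poset-compatible covering subgraph of Γ(V_2). Under this bijection, γ corresponds to the union γ'⊔γ'', V_i is the union of blocks of γ in U_i, and (Γ/γ)(U_i) = Γ(V_i)/(γ restricted to V_i). -/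
universe u v

variable {V : Type u} {E : Type v}

namespace S13

open Relation

/-! ### general graph lemmas -/

theorem giso_symm {V1 E1 V2 E2 : Type*} {s1 t1 : E1 → V1} {s2 t2 : E2 → V2}
    (h : GIso s1 t1 s2 t2) : GIso s2 t2 s1 t1 := by
  obtain ⟨f, g, hs, ht⟩ := h
  refine ⟨f.symm, g.symm, fun e => ?_, fun e => ?_⟩
  · have := hs (g.symm e); rw [Equiv.apply_symm_apply] at this
    rw [← this, Equiv.symm_apply_apply]
  · have := ht (g.symm e); rw [Equiv.apply_symm_apply] at this
    rw [← this, Equiv.symm_apply_apply]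

theorem giso_cycleFree {V1 E1 V2 E2 : Type*} {s1 t1 : E1 → V1} {s2 t2 : E2 → V2}
    (h : GIso s1 t1 s2 t2) (hc : CycleFree s2 t2) : CycleFree s1 t1 := by
  obtain ⟨f, g, hs, ht⟩ := h
  intro x hx
  refine hc (f x) (Relation.TransGen.lift f (fun a b hab => ?_) _ _ hx)
  obtain ⟨e, rfl, rfl⟩ := hab
  exact ⟨g e, (hs e).symm, (ht e).symm⟩

theorem induced_cycleFree (src tgt : E → V) (P : Set V) (h : CycleFree src tgt) :
    CycleFree (isrc src tgt P) (itgt src tgt P) := by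
  intro x hx
  refine h x.val (Relation.TransGen.lift Subtype.val (fun a b hab => ?_) _ _ hx)
  obtain ⟨e, he1, he2⟩ := hab
  exact ⟨e.1, congrArg Subtype.val he1, congrArg Subtype.val he2⟩

theorem proj_le (src tgt : E → V) (s : Setoid V) {v w : V} (hp : PathLe src tgt v w) :
    PathLe (csrc src tgt s) (ctgt src tgt s) (Quotient.mk s v) (Quotient.mk s w) := by
  induction hp with
  | refl => exact .refl
  | tail _ hstep ih =>
      obtain ⟨e, rfl, rfl⟩ := hstep
      by_cases hr : s.r (src e) (tgt e)
      · have he : Quotient.mk s (src e) = Quotient.mk s (tgt e) := Quot.sound hr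
        rw [← he]; exact ih
      · exact ih.tail ⟨⟨e, hr⟩, rfl, rfl⟩

theorem step_lift {W F : Type*} {S T : F → W} {A : Set W} {a b : W}
    (hs : Step S T a b) (ha : a ∈ A) (hb : b ∈ A) :
    Step (isrc S T A) (itgt S T A) ⟨a, ha⟩ ⟨b, hb⟩ := by
  obtain ⟨e, rfl, rfl⟩ := hs
  exact ⟨⟨e, ha, hb⟩, rfl, rfl⟩

theorem stay_fwd {W F : Type*} {S T : F → W} {A : Set W}
    (hstep : ∀ a b, Step S T a b → a ∈ A → b ∈ A) {x y : W}
    (hp : PathLe S T x y) (hx : x ∈ A) : y ∈ A := by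
  induction hp with
  | refl => exact hx
  | tail _ hs ih => exact hstep _ _ hs ih

theorem trans_induced_fwd {W F : Type*} {S T : F → W} {A : Set W}
    (hstep : ∀ a b, Step S T a b → a ∈ A → b ∈ A) {x y : W}
    (hp : Relation.TransGen (Step S T) x y) (hx : x ∈ A) :
    ∃ hy : y ∈ A, Relation.TransGen (Step (isrc S T A) (itgt S T A)) ⟨x, hx⟩ ⟨y, hy⟩ := by
  induction hp with
  | single hs => exact ⟨hstep _ _ hs hx, .single (step_lift hs hx (hstep _ _ hs hx))⟩
  | tail _ hs ih =>
      obtain ⟨hb, w⟩ := ih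
      exact ⟨hstep _ _ hs hb, w.tail (step_lift hs hb (hstep _ _ hs hb))⟩

theorem trans_induced_bwd {W F : Type*} {S T : F → W} {B : Set W}
    (hstep : ∀ a b, Step S T a b → b ∈ B → a ∈ B) {x y : W}
    (hp : Relation.TransGen (Step S T) x y) (hy : y ∈ B) :
    ∃ hx : x ∈ B, Relation.TransGen (Step (isrc S T B) (itgt S T B)) ⟨x, hx⟩ ⟨y, hy⟩ := by
  induction hp with
  | single hs => exact ⟨hstep _ _ hs hy, .single (step_lift hs (hstep _ _ hs hy) hy)⟩
  | @tail b c _ hs ih =>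
      have hb : b ∈ B := hstep _ _ hs hy
      obtain ⟨hx, w⟩ := ih hb
      exact ⟨hx, w.tail (step_lift hs hb hy)⟩

theorem cfree_of_partition {W F : Type*} {S T : F → W} {A B : Set W}
    (hd : Disjoint A B) (hu : A ∪ B = Set.univ)
    (hstep : ∀ a b, Step S T a b → a ∈ A → b ∈ A)
    (hA : CycleFree (isrc S T A) (itgt S T A))
    (hB : CycleFree (isrc S T B) (itgt S T B)) : CycleFree S T := by
  intro x hx
  have hmem : x ∈ A ∪ B := hu ▸ Set.mem_univ x
  rcases hmem with hxa | hxb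
  · obtain ⟨_, w⟩ := trans_induced_fwd hstep hx hxa
    exact hA _ w
  · have hstep' : ∀ a b, Step S T a b → b ∈ B → a ∈ B := by
      intro a b hs hbB
      have : a ∈ A ∪ B := hu ▸ Set.mem_univ a
      rcases this with haA | haB
      · exact absurd hbB (Set.disjoint_left.mp hd (hstep _ _ hs haA))
      · exact haB
    obtain ⟨_, w⟩ := trans_induced_bwd hstep' hx hxb
    exact hB _ w

theorem setlt_of_partition {W F : Type*} {S T : F → W} {A B : Set W}
    (hd : Disjoint A B)
    (hstep : ∀ a b, Step S T a b → a ∈ A → b ∈ A) : SetLt S T B A := by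
  intro a ha b hb hor
  rcases hor with h1 | h2
  · exact h1
  · exact absurd (stay_fwd hstep h2.to_reflTransGen hb) (fun hA => Set.disjoint_left.mp hd hA ha)

/-! ### imgSet and the key GIso -/

def imgSet (s : Setoid V) (A : Set V) : Set (Quotient s) :=
  {x | ∃ v ∈ A, Quotient.mk s v = x}

theorem mem_imgSet {s : Setoid V} {P : Set V}
    (hblk : ∀ v w, s.r v w → v ∈ P → w ∈ P) (v : V) :
    Quotient.mk s v ∈ imgSet s P ↔ v ∈ P := by
  constructor
  · rintro ⟨w, hw, hq⟩
    exact hblk w v (Quotient.exact hq) hw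
  · intro hv; exact ⟨v, hv, rfl⟩

def restrS (s : Setoid V) (P : Set V) : Setoid ↥P :=
  ⟨fun a b => s.r a.val b.val,
   ⟨fun _ => s.iseqv.refl _, fun h => s.iseqv.symm h, fun h1 h2 => s.iseqv.trans h1 h2⟩⟩

theorem key_giso (src tgt : E → V) (s : Setoid V) (P : Set V) (t : Setoid ↥P)
    (hrt : ∀ a b : ↥P, s.r a.val b.val ↔ t.r a b)
    (hblk : ∀ v w, s.r v w → v ∈ P → w ∈ P) :
    GIso (isrc (csrc src tgt s) (ctgt src tgt s) (imgSet s P))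
         (itgt (csrc src tgt s) (ctgt src tgt s) (imgSet s P))
         (csrc (isrc src tgt P) (itgt src tgt P) t)
         (ctgt (isrc src tgt P) (itgt src tgt P) t) := by
  refine giso_symm ?_
  have memU : ∀ v : V, Quotient.mk s v ∈ imgSet s P ↔ v ∈ P := mem_imgSet hblk
  let q1 : Quotient t → ↥(imgSet s P) :=
    Quotient.lift (fun a : ↥P => (⟨Quotient.mk s a.val, (memU _).mpr a.2⟩ : ↥(imgSet s P)))
      (fun a b hab => Subtype.ext (Quot.sound ((hrt a b).mpr hab)))
  have hbij : Function.Bijective q1 := by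
    constructor
    · intro a b
      induction a using Quotient.ind
      induction b using Quotient.ind
      intro hq
      have : s.r _ _ := Quotient.exact (congrArg Subtype.val hq)
      exact Quot.sound ((hrt _ _).mp this)
    · rintro ⟨x, hx⟩
      obtain ⟨v, hv, rfl⟩ := hx
      exact ⟨Quotient.mk t ⟨v, hv⟩, rfl⟩
  let g0 : CEdge (isrc src tgt P) (itgt src tgt P) t ≃
      IEdge (csrc src tgt s) (ctgt src tgt s) (imgSet s P) :=
    { toFun := fun ce =>
        ⟨⟨ce.1.1, fun hr => ce.2 ((hrt (isrc src tgt P ce.1) (itgt src tgt P ce.1)).mp hr)⟩,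
          (memU _).mpr ce.1.2.1, (memU _).mpr ce.1.2.2⟩
      invFun := fun ie =>
        ⟨⟨ie.1.1, (memU _).mp ie.2.1, (memU _).mp ie.2.2⟩,
          fun hr => ie.1.2 ((hrt _ _).mpr hr)⟩
      left_inv := fun ce => Subtype.ext (Subtype.ext rfl)
      right_inv := fun ie => Subtype.ext (Subtype.ext rfl) }
  exact ⟨Equiv.ofBijective q1 hbij, g0, fun e => Subtype.ext rfl, fun e => Subtype.ext rfl⟩

end S13

namespace S13
open Relation

/-! ### walk transfer -/

theorem walk_up (src tgt : E → V) {P : Set V} {B : Set ↥P} {C : Set V}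
    (hBC : ∀ x : ↥P, x ∈ B → x.val ∈ C) {a b : ↥P}
    (hw : ReflTransGen (UStepIn (isrc src tgt P) (itgt src tgt P) B) a b) :
    ReflTransGen (UStepIn src tgt C) a.val b.val := by
  refine Relation.ReflTransGen.lift Subtype.val (fun x y hxy => ?_) _ _ hw
  obtain ⟨hx, hy, e, hor⟩ := hxy
  refine ⟨hBC _ hx, hBC _ hy, e.1, ?_⟩
  rcases hor with ⟨h1, h2⟩ | ⟨h1, h2⟩
  · exact Or.inl ⟨congrArg Subtype.val h1, congrArg Subtype.val h2⟩
  · exact Or.inr ⟨congrArg Subtype.val h1, congrArg Subtype.val h2⟩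

theorem walk_down (src tgt : E → V) {P : Set V} {B : Set V} (hBP : B ⊆ P) {a b : V}
    (hw : ReflTransGen (UStepIn src tgt B) a b) :
    ∀ (ha : a ∈ P) (hb : b ∈ P),
      ReflTransGen (UStepIn (isrc src tgt P) (itgt src tgt P) {x : ↥P | x.val ∈ B})
        ⟨a, ha⟩ ⟨b, hb⟩ := by
  induction hw with
  | refl => intro ha hb; exact .refl
  | @tail x y _ hstep ih =>
      intro ha hb
      obtain ⟨hx, hy, e, hor⟩ := hstep
      have hxP : x ∈ P := hBP hx
      refine (ih ha hxP).tail ⟨hx, hy, ?_⟩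
      rcases hor with ⟨h1, h2⟩ | ⟨h1, h2⟩
      · exact ⟨⟨e, h1 ▸ hxP, h2 ▸ hb⟩, Or.inl ⟨Subtype.ext h1, Subtype.ext h2⟩⟩
      · exact ⟨⟨e, h1 ▸ hb, h2 ▸ hxP⟩, Or.inr ⟨Subtype.ext h1, Subtype.ext h2⟩⟩

theorem restr_cover (src tgt : E → V) (s : Setoid V) (P : Set V)
    (hblk : ∀ v w, s.r v w → v ∈ P → w ∈ P)
    (hcov : CoveringSetoid src tgt s) :
    CoveringSetoid (isrc src tgt P) (itgt src tgt P) (restrS s P) := by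
  intro a x hx y hy
  have hB : {w | s.r a.val w} ⊆ P := fun w hw => hblk a.val w hw a.2
  have hw := hcov a.val x.val hx y.val hy
  have := walk_down src tgt hB hw x.2 y.2
  exact this

/-! ### the combined setoid -/

def combineR (V1 V2 : Set V) (s1 : Setoid ↥V1) (s2 : Setoid ↥V2) (v w : V) : Prop :=
  (∃ (hv : v ∈ V1) (hw : w ∈ V1), s1.r ⟨v, hv⟩ ⟨w, hw⟩) ∨
  (∃ (hv : v ∈ V2) (hw : w ∈ V2), s2.r ⟨v, hv⟩ ⟨w, hw⟩)

def combineS (V1 V2 : Set V) (s1 : Setoid ↥V1) (s2 : Setoid ↥V2)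
    (hd : Disjoint V1 V2) (hu : V1 ∪ V2 = Set.univ) : Setoid V := by
  refine ⟨combineR V1 V2 s1 s2, ⟨fun v => ?_, fun {v w} hr => ?_, fun {v w x} h1 h2 => ?_⟩⟩
  · have : v ∈ V1 ∪ V2 := hu ▸ Set.mem_univ v
    rcases this with hv | hv
    · exact Or.inl ⟨hv, hv, s1.iseqv.refl _⟩
    · exact Or.inr ⟨hv, hv, s2.iseqv.refl _⟩
  · rcases hr with ⟨hv, hw, hr⟩ | ⟨hv, hw, hr⟩
    · exact Or.inl ⟨hw, hv, s1.iseqv.symm hr⟩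
    · exact Or.inr ⟨hw, hv, s2.iseqv.symm hr⟩
  · rcases h1 with ⟨hv, hw, hr⟩ | ⟨hv, hw, hr⟩ <;> rcases h2 with ⟨hw', hx, hr'⟩ | ⟨hw', hx, hr'⟩
    · exact Or.inl ⟨hv, hx, s1.iseqv.trans hr hr'⟩
    · exact absurd hw' (Set.disjoint_left.mp hd hw)
    · exact absurd hw (Set.disjoint_left.mp hd hw')
    · exact Or.inr ⟨hv, hx, s2.iseqv.trans hr hr'⟩

section Combine

variable (src tgt : E → V) {V1 V2 : Set V} {s1 : Setoid ↥V1} {s2 : Setoid ↥V2}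
  (hd : Disjoint V1 V2) (hu : V1 ∪ V2 = Set.univ)

theorem hblk1 : ∀ v w, (combineS V1 V2 s1 s2 hd hu).r v w → v ∈ V1 → w ∈ V1 := by
  rintro v w (⟨hv, hw, _⟩ | ⟨hv, hw, _⟩) h1
  · exact hw
  · exact absurd h1 (Set.disjoint_right.mp hd hv)

theorem hblk2 : ∀ v w, (combineS V1 V2 s1 s2 hd hu).r v w → v ∈ V2 → w ∈ V2 := by
  rintro v w (⟨hv, hw, _⟩ | ⟨hv, hw, _⟩) h2
  · exact absurd h2 (Set.disjoint_left.mp hd hv)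
  · exact hw

theorem hrt1 : ∀ a b : ↥V1, (combineS V1 V2 s1 s2 hd hu).r a.val b.val ↔ s1.r a b := by
  rintro ⟨a, ha⟩ ⟨b, hb⟩
  constructor
  · rintro (⟨hv, hw, hr⟩ | ⟨hv, _, _⟩)
    · exact hr
    · exact absurd ha (Set.disjoint_right.mp hd hv)
  · intro hr; exact Or.inl ⟨ha, hb, hr⟩

theorem hrt2 : ∀ a b : ↥V2, (combineS V1 V2 s1 s2 hd hu).r a.val b.val ↔ s2.r a b := by
  rintro ⟨a, ha⟩ ⟨b, hb⟩
  constructor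
  · rintro (⟨hv, _, _⟩ | ⟨hv, hw, hr⟩)
    · exact absurd ha (Set.disjoint_left.mp hd hv)
    · exact hr
  · intro hr; exact Or.inr ⟨ha, hb, hr⟩

theorem noedge (hlt : SetLt src tgt V2 V1) (h : CycleFree src tgt) :
    ∀ e, src e ∈ V1 → tgt e ∈ V2 → False := by
  intro e h1 h2
  have hstep : PathLt src tgt (src e) (tgt e) := .single ⟨e, rfl, rfl⟩
  have := hlt (tgt e) h2 (src e) h1 (Or.inr hstep)
  exact h (src e) (hstep.trans this)

end Combine

end S13

namespace S13
open Relation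

section Combine2

variable (src tgt : E → V) {V1 V2 : Set V} {s1 : Setoid ↥V1} {s2 : Setoid ↥V2}
  (hd : Disjoint V1 V2) (hu : V1 ∪ V2 = Set.univ)

theorem img_disjoint :
    Disjoint (imgSet (combineS V1 V2 s1 s2 hd hu) V1) (imgSet (combineS V1 V2 s1 s2 hd hu) V2) := by
  rw [Set.disjoint_left]
  rintro x ⟨v, hv, rfl⟩ hx2
  have hv2 : v ∈ V2 := (mem_imgSet (hblk2 hd hu) v).mp hx2
  exact Set.disjoint_left.mp hd hv hv2

theorem img_union :
    imgSet (combineS V1 V2 s1 s2 hd hu) V1 ∪ imgSet (combineS V1 V2 s1 s2 hd hu) V2 =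
      Set.univ := by
  refine Set.eq_univ_iff_forall.mpr fun x => ?_
  obtain ⟨v, rfl⟩ := Quot.exists_rep x
  have : v ∈ V1 ∪ V2 := hu ▸ Set.mem_univ v
  rcases this with hv | hv
  · exact Or.inl ⟨v, hv, rfl⟩
  · exact Or.inr ⟨v, hv, rfl⟩

theorem qstep (hlt : SetLt src tgt V2 V1) (h : CycleFree src tgt) :
    ∀ x y, Step (csrc src tgt (combineS V1 V2 s1 s2 hd hu))
        (ctgt src tgt (combineS V1 V2 s1 s2 hd hu)) x y →
      x ∈ imgSet (combineS V1 V2 s1 s2 hd hu) V1 →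
      y ∈ imgSet (combineS V1 V2 s1 s2 hd hu) V1 := by
  rintro x y ⟨ce, rfl, rfl⟩ hx
  have h1 : src ce.1 ∈ V1 := (mem_imgSet (hblk1 hd hu) _).mp hx
  have : tgt ce.1 ∈ V1 ∪ V2 := hu ▸ Set.mem_univ _
  rcases this with h2 | h2
  · exact (mem_imgSet (hblk1 hd hu) _).mpr h2
  · exact absurd h2 (fun h2 => noedge src tgt hlt h ce.1 h1 h2)

theorem combine_cover (hc1 : CoveringSetoid (isrc src tgt V1) (itgt src tgt V1) s1)
    (hc2 : CoveringSetoid (isrc src tgt V2) (itgt src tgt V2) s2) :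
    CoveringSetoid src tgt (combineS V1 V2 s1 s2 hd hu) := by
  intro v
  have hv : v ∈ V1 ∪ V2 := hu ▸ Set.mem_univ v
  rcases hv with hv | hv
  · rintro w (⟨hv1, hw1, hr⟩ | ⟨hv2, _, _⟩) x hx
    · rcases hx with ⟨hv1', hx1, hr'⟩ | ⟨hv2, _, _⟩
      · have walk := hc1 ⟨v, hv1⟩ ⟨w, hw1⟩ hr ⟨x, hx1⟩ hr'
        exact walk_up src tgt (fun b hb => Or.inl ⟨hv1, b.2, hb⟩) walk
      · exact absurd hv2 (Set.disjoint_left.mp hd hv)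
    · exact absurd hv2 (Set.disjoint_left.mp hd hv)
  · rintro w (⟨hv1, _, _⟩ | ⟨hv2, hw2, hr⟩) x hx
    · exact absurd hv1 (Set.disjoint_right.mp hd hv)
    · rcases hx with ⟨hv1, _, _⟩ | ⟨hv2', hx2, hr'⟩
      · exact absurd hv1 (Set.disjoint_right.mp hd hv)
      · have walk := hc2 ⟨v, hv2⟩ ⟨w, hw2⟩ hr ⟨x, hx2⟩ hr'
        exact walk_up src tgt (fun b hb => Or.inr ⟨hv2, b.2, hb⟩) walk

theorem combine_cfree (hlt : SetLt src tgt V2 V1) (h : CycleFree src tgt)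
    (hf1 : CycleFree (csrc (isrc src tgt V1) (itgt src tgt V1) s1)
      (ctgt (isrc src tgt V1) (itgt src tgt V1) s1))
    (hf2 : CycleFree (csrc (isrc src tgt V2) (itgt src tgt V2) s2)
      (ctgt (isrc src tgt V2) (itgt src tgt V2) s2)) :
    CycleFree (csrc src tgt (combineS V1 V2 s1 s2 hd hu))
      (ctgt src tgt (combineS V1 V2 s1 s2 hd hu)) := by
  refine cfree_of_partition (img_disjoint hd hu) (img_union hd hu)
    (qstep src tgt hd hu hlt h) ?_ ?_
  · exact giso_cycleFree
      (key_giso src tgt _ V1 s1 (hrt1 hd hu) (hblk1 hd hu)) hf1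
  · exact giso_cycleFree
      (key_giso src tgt _ V2 s2 (hrt2 hd hu) (hblk2 hd hu)) hf2

theorem combine_admcut (hlt : SetLt src tgt V2 V1) (h : CycleFree src tgt) :
    AdmCut (csrc src tgt (combineS V1 V2 s1 s2 hd hu))
      (ctgt src tgt (combineS V1 V2 s1 s2 hd hu))
      (imgSet (combineS V1 V2 s1 s2 hd hu) V1) (imgSet (combineS V1 V2 s1 s2 hd hu) V2) :=
  ⟨img_disjoint hd hu, img_union hd hu,
    setlt_of_partition (img_disjoint hd hu) (qstep src tgt hd hu hlt h)⟩

end Combine2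

end S13

namespace S13
open Relation

section Back

variable (src tgt : E → V) (s : Setoid V) (U1 U2 : Set (Quotient s))

theorem backblk (U : Set (Quotient s)) :
    ∀ v w, s.r v w → v ∈ {v | Quotient.mk s v ∈ U} → w ∈ {v | Quotient.mk s v ∈ U} := by
  intro v w hr hv
  have : Quotient.mk s v = Quotient.mk s w := Quot.sound hr
  exact Set.mem_setOf_eq ▸ (this ▸ hv)

theorem back_admcut (hcf : CycleFree (csrc src tgt s) (ctgt src tgt s))
    (hadm : AdmCut (csrc src tgt s) (ctgt src tgt s) U1 U2) :
    AdmCut src tgt {v | Quotient.mk s v ∈ U1} {v | Quotient.mk s v ∈ U2} := by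
  obtain ⟨hd, hu, hlt⟩ := hadm
  refine ⟨?_, ?_, ?_⟩
  · rw [Set.disjoint_left]
    intro v hv1 hv2
    exact Set.disjoint_left.mp hd hv1 hv2
  · refine Set.eq_univ_iff_forall.mpr fun v => ?_
    have : Quotient.mk s v ∈ U1 ∪ U2 := hu ▸ Set.mem_univ _
    exact this
  · intro v hv w hw hor
    rcases hor with h1 | h1
    · exact h1
    · exfalso
      have hle := proj_le src tgt s h1.to_reflTransGen
      rcases Relation.reflTransGen_iff_eq_or_transGen.mp hle with heq | hq
      · have hw' : Quotient.mk s w ∈ U1 := hw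
        rw [← heq] at hw'
        exact Set.disjoint_left.mp hd hw' hv
      · have := hlt _ hv _ hw (Or.inr hq)
        exact hcf _ (hq.trans this)

theorem back_cfree (hcf : CycleFree (csrc src tgt s) (ctgt src tgt s))
    (U : Set (Quotient s)) :
    CycleFree
      (csrc (isrc src tgt {v | Quotient.mk s v ∈ U}) (itgt src tgt {v | Quotient.mk s v ∈ U})
        (restrS s {v | Quotient.mk s v ∈ U}))
      (ctgt (isrc src tgt {v | Quotient.mk s v ∈ U}) (itgt src tgt {v | Quotient.mk s v ∈ U})
        (restrS s {v | Quotient.mk s v ∈ U})) :=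
  giso_cycleFree
    (giso_symm (key_giso src tgt s _ (restrS s {v | Quotient.mk s v ∈ U})
      (fun _ _ => Iff.rfl) (backblk s U)))
    (induced_cycleFree _ _ _ hcf)

end Back

/-! ### HEq helpers -/

theorem setoid_heq {P Q : Set V} (hPQ : P = Q) {t : Setoid ↥P} {u : Setoid ↥Q}
    (hr : ∀ (a b : V) (ha : a ∈ P) (hb : b ∈ P) (ha' : a ∈ Q) (hb' : b ∈ Q),
      t.r ⟨a, ha⟩ ⟨b, hb⟩ ↔ u.r ⟨a, ha'⟩ ⟨b, hb'⟩) : HEq t u := by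
  subst hPQ
  exact heq_of_eq (Setoid.ext fun a b => hr a.val b.val a.2 b.2 a.2 b.2)

theorem prod_heq.{w1, w2} {α α' : Type w1} {β β' : Type w2} {a : α} {a' : α'} {b : β} {b' : β'}
    (h1 : HEq a a') (h2 : HEq b b') : HEq (a, b) (a', b') := by
  cases h1; cases h2; rfl

theorem set_heq {s s' : Setoid V} (hss : s = s') {A : Set (Quotient s)} {B : Set (Quotient s')}
    (h : ∀ v, Quotient.mk s v ∈ A ↔ Quotient.mk s' v ∈ B) : HEq A B := by
  subst hss
  refine heq_of_eq (Set.ext fun x => ?_)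
  obtain ⟨v, rfl⟩ := Quot.exists_rep x
  exact h v

end S13

namespace S13
open Relation

def BSide (src tgt : E → V) :=
  {y : Σ p : Set V × Set V, Setoid ↥p.1 × Setoid ↥p.2 //
    AdmCut src tgt y.1.1 y.1.2 ∧
    CoveringSetoid (isrc src tgt y.1.1) (itgt src tgt y.1.1) y.2.1 ∧
    CycleFree (csrc (isrc src tgt y.1.1) (itgt src tgt y.1.1) y.2.1)
      (ctgt (isrc src tgt y.1.1) (itgt src tgt y.1.1) y.2.1) ∧
    CoveringSetoid (isrc src tgt y.1.2) (itgt src tgt y.1.2) y.2.2 ∧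
    CycleFree (csrc (isrc src tgt y.1.2) (itgt src tgt y.1.2) y.2.2)
      (ctgt (isrc src tgt y.1.2) (itgt src tgt y.1.2) y.2.2)}

def ASide (src tgt : E → V) :=
  {x : Σ s : Setoid V, Set (Quotient s) × Set (Quotient s) //
    CoveringSetoid src tgt x.1 ∧
    CycleFree (csrc src tgt x.1) (ctgt src tgt x.1) ∧
    AdmCut (csrc src tgt x.1) (ctgt src tgt x.1) x.2.1 x.2.2}

def toFun (src tgt : E → V) (h : CycleFree src tgt) (b : BSide src tgt) : ASide src tgt :=
  ⟨⟨combineS b.1.1.1 b.1.1.2 b.1.2.1 b.1.2.2 b.2.1.1 b.2.1.2.1,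
    (imgSet _ b.1.1.1, imgSet _ b.1.1.2)⟩,
   combine_cover src tgt b.2.1.1 b.2.1.2.1 b.2.2.1 b.2.2.2.2.1,
   combine_cfree src tgt b.2.1.1 b.2.1.2.1 b.2.1.2.2 h b.2.2.2.1 b.2.2.2.2.2,
   combine_admcut src tgt b.2.1.1 b.2.1.2.1 b.2.1.2.2 h⟩

def invFun (src tgt : E → V) (a : ASide src tgt) : BSide src tgt :=
  ⟨⟨({v | Quotient.mk a.1.1 v ∈ a.1.2.1}, {v | Quotient.mk a.1.1 v ∈ a.1.2.2}),
    (restrS a.1.1 _, restrS a.1.1 _)⟩,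
   back_admcut src tgt a.1.1 a.1.2.1 a.1.2.2 a.2.2.1 a.2.2.2,
   restr_cover src tgt a.1.1 _ (backblk a.1.1 a.1.2.1) a.2.1,
   back_cfree src tgt a.1.1 a.2.2.1 a.1.2.1,
   restr_cover src tgt a.1.1 _ (backblk a.1.1 a.1.2.2) a.2.1,
   back_cfree src tgt a.1.1 a.2.2.1 a.1.2.2⟩

theorem left_inv (src tgt : E → V) (h : CycleFree src tgt) :
    ∀ b, invFun src tgt (toFun src tgt h b) = b := by
  rintro ⟨⟨⟨V1, V2⟩, s1, s2⟩, hb⟩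
  obtain ⟨hadm, hc1, hf1, hc2, hf2⟩ := hb
  obtain ⟨hd, hu, hlt⟩ := hadm
  apply Subtype.ext
  dsimp only [invFun, toFun]
  have e1 : {v | Quotient.mk (combineS V1 V2 s1 s2 hd hu) v ∈
      imgSet (combineS V1 V2 s1 s2 hd hu) V1} = V1 :=
    Set.ext fun v => mem_imgSet (hblk1 hd hu) v
  have e2 : {v | Quotient.mk (combineS V1 V2 s1 s2 hd hu) v ∈
      imgSet (combineS V1 V2 s1 s2 hd hu) V2} = V2 :=
    Set.ext fun v => mem_imgSet (hblk2 hd hu) v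
  refine Sigma.ext ?_ ?_
  · dsimp only; exact Prod.ext e1 e2
  · dsimp only
    refine prod_heq (setoid_heq e1 fun a b ha hb ha' hb' => ?_)
      (setoid_heq e2 fun a b ha hb ha' hb' => ?_)
    · exact hrt1 hd hu ⟨a, ha'⟩ ⟨b, hb'⟩
    · exact hrt2 hd hu ⟨a, ha'⟩ ⟨b, hb'⟩

theorem right_inv (src tgt : E → V) (h : CycleFree src tgt) :
    ∀ a, toFun src tgt h (invFun src tgt a) = a := by
  rintro ⟨⟨s, U1, U2⟩, ha⟩
  obtain ⟨hcov, hcf, hadm⟩ := ha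
  apply Subtype.ext
  dsimp only [invFun, toFun]
  have hs : ∀ (hd : Disjoint {v | Quotient.mk s v ∈ U1} {v | Quotient.mk s v ∈ U2})
      (hu : {v | Quotient.mk s v ∈ U1} ∪ {v | Quotient.mk s v ∈ U2} = Set.univ),
      combineS _ _ (restrS s {v | Quotient.mk s v ∈ U1})
        (restrS s {v | Quotient.mk s v ∈ U2}) hd hu = s := by
    intro hd hu
    refine Setoid.ext fun v w => ⟨?_, ?_⟩
    · rintro (⟨hv, hw, hr⟩ | ⟨hv, hw, hr⟩) <;> exact hr
    · intro hr
      have hm : Quotient.mk s v ∈ U1 ∪ U2 := hadm.2.1 ▸ Set.mem_univ _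
      have hvw : Quotient.mk s v = Quotient.mk s w := Quot.sound hr
      rcases hm with h1 | h1
      · exact Or.inl ⟨h1, (show Quotient.mk s w ∈ U1 from hvw ▸ h1), hr⟩
      · exact Or.inr ⟨h1, (show Quotient.mk s w ∈ U2 from hvw ▸ h1), hr⟩
  have blk1 : ∀ (hd : Disjoint {v | Quotient.mk s v ∈ U1} {v | Quotient.mk s v ∈ U2})
      (hu : {v | Quotient.mk s v ∈ U1} ∪ {v | Quotient.mk s v ∈ U2} = Set.univ),
      ∀ v w, (combineS _ _ (restrS s {v | Quotient.mk s v ∈ U1})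
        (restrS s {v | Quotient.mk s v ∈ U2}) hd hu).r v w →
        v ∈ {v | Quotient.mk s v ∈ U1} → w ∈ {v | Quotient.mk s v ∈ U1} := fun hd hu =>
    hblk1 hd hu
  have blk2 : ∀ (hd : Disjoint {v | Quotient.mk s v ∈ U1} {v | Quotient.mk s v ∈ U2})
      (hu : {v | Quotient.mk s v ∈ U1} ∪ {v | Quotient.mk s v ∈ U2} = Set.univ),
      ∀ v w, (combineS _ _ (restrS s {v | Quotient.mk s v ∈ U1})
        (restrS s {v | Quotient.mk s v ∈ U2}) hd hu).r v w →
        v ∈ {v | Quotient.mk s v ∈ U2} → w ∈ {v | Quotient.mk s v ∈ U2} := fun hd hu =>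
    hblk2 hd hu
  have hd0 : Disjoint {v | Quotient.mk s v ∈ U1} {v | Quotient.mk s v ∈ U2} :=
    Set.disjoint_left.mpr fun v hv1 hv2 => Set.disjoint_left.mp hadm.1 hv1 hv2
  have hu0 : {v | Quotient.mk s v ∈ U1} ∪ {v | Quotient.mk s v ∈ U2} = Set.univ :=
    Set.eq_univ_iff_forall.mpr fun v =>
      (show Quotient.mk s v ∈ U1 ∪ U2 from hadm.2.1 ▸ Set.mem_univ _)
  refine Sigma.ext ?_ ?_
  · exact hs hd0 hu0
  · exact prod_heq (set_heq (hs hd0 hu0) fun v => mem_imgSet (blk1 hd0 hu0) v)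
      (set_heq (hs hd0 hu0) fun v => mem_imgSet (blk2 hd0 hu0) v)

end S13

/-- the bijection between (a) pairs (poset-compatible covering
subgraph `γ` of `Γ`, admissible cut `(U₁,U₂)` of `Γ/γ`) and (b) triples
(admissible cut `(V₁,V₂)` of `Γ`, poset-compatible covering subgraph `γ'` of
`Γ(V₁)`, poset-compatible covering subgraph `γ''` of `Γ(V₂)`). Under the
bijection `γ = γ' ⊔ γ''`, `Uᵢ` is the image in `Γ/γ` of `Vᵢ`, and
`(Γ/γ)(Uᵢ) ≅ Γ(Vᵢ)/γ⁽ⁱ⁾`. -/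
theorem stmt13 [Fintype V] [Fintype E] (src tgt : E → V) (h : CycleFree src tgt) :
    ∃ F : {y : Σ p : Set V × Set V, Setoid ↥p.1 × Setoid ↥p.2 //
        AdmCut src tgt y.1.1 y.1.2 ∧
        CoveringSetoid (isrc src tgt y.1.1) (itgt src tgt y.1.1) y.2.1 ∧
        CycleFree (csrc (isrc src tgt y.1.1) (itgt src tgt y.1.1) y.2.1)
          (ctgt (isrc src tgt y.1.1) (itgt src tgt y.1.1) y.2.1) ∧
        CoveringSetoid (isrc src tgt y.1.2) (itgt src tgt y.1.2) y.2.2 ∧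
        CycleFree (csrc (isrc src tgt y.1.2) (itgt src tgt y.1.2) y.2.2)
          (ctgt (isrc src tgt y.1.2) (itgt src tgt y.1.2) y.2.2)} ≃
      {x : Σ s : Setoid V, Set (Quotient s) × Set (Quotient s) //
        CoveringSetoid src tgt x.1 ∧
        CycleFree (csrc src tgt x.1) (ctgt src tgt x.1) ∧
        AdmCut (csrc src tgt x.1) (ctgt src tgt x.1) x.2.1 x.2.2},
      ∀ b, (∀ v w : V, (F b).1.1.r v w ↔
          ((∃ (hv : v ∈ b.1.1.1) (hw : w ∈ b.1.1.1), b.1.2.1.r ⟨v, hv⟩ ⟨w, hw⟩) ∨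
           (∃ (hv : v ∈ b.1.1.2) (hw : w ∈ b.1.1.2), b.1.2.2.r ⟨v, hv⟩ ⟨w, hw⟩))) ∧
        (F b).1.2.1 = {x | ∃ v ∈ b.1.1.1, Quotient.mk (F b).1.1 v = x} ∧
        (F b).1.2.2 = {x | ∃ v ∈ b.1.1.2, Quotient.mk (F b).1.1 v = x} ∧
        GIso (isrc (csrc src tgt (F b).1.1) (ctgt src tgt (F b).1.1) (F b).1.2.1)
             (itgt (csrc src tgt (F b).1.1) (ctgt src tgt (F b).1.1) (F b).1.2.1)
             (csrc (isrc src tgt b.1.1.1) (itgt src tgt b.1.1.1) b.1.2.1)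
             (ctgt (isrc src tgt b.1.1.1) (itgt src tgt b.1.1.1) b.1.2.1) ∧
        GIso (isrc (csrc src tgt (F b).1.1) (ctgt src tgt (F b).1.1) (F b).1.2.2)
             (itgt (csrc src tgt (F b).1.1) (ctgt src tgt (F b).1.1) (F b).1.2.2)
             (csrc (isrc src tgt b.1.1.2) (itgt src tgt b.1.1.2) b.1.2.2)
             (ctgt (isrc src tgt b.1.1.2) (itgt src tgt b.1.1.2) b.1.2.2) := by
  refine ⟨⟨S13.toFun src tgt h, S13.invFun src tgt, S13.left_inv src tgt h,
    S13.right_inv src tgt h⟩, fun b => ?_⟩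
  refine ⟨fun v w => Iff.rfl, rfl, rfl, ?_, ?_⟩
  · exact S13.key_giso src tgt _ b.1.1.1 b.1.2.1 (S13.hrt1 b.2.1.1 b.2.1.2.1)
      (S13.hblk1 b.2.1.1 b.2.1.2.1)
  · exact S13.key_giso src tgt _ b.1.1.2 b.1.2.2 (S13.hrt2 b.2.1.1 b.2.1.2.1)
      (S13.hblk2 b.2.1.1 b.2.1.2.1)
end

section
/- If Γ is a finite oriented cycle-free graph, γ is a poset-compatible covering subgraph, and (V_1, V_2) is an admissible cut of Γ such that every block of γ is contained in V_1 or in V_2, then the restriction of γ to V_i is a poset-compatible covering subgraph of the induced subgraph Γ(V_i), and (Γ/γ)(U_i) is isomorphic to Γ(V_i)/(γ ∩ Γ(V_i)), where U_i is the set of blocks of γ contained in V_i. -/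
universe u v

variable {V : Type u} {E : Type v}

theorem aux_main (src tgt : E → V)
    (s : Setoid V) (hs : CoveringSetoid src tgt s)
    (hpc : CycleFree (csrc src tgt s) (ctgt src tgt s))
    (W : Set V) (hW : ∀ v w : V, s.r v w → (v ∈ W ↔ w ∈ W)) :
    CoveringSetoid (isrc src tgt W) (itgt src tgt W) (s.comap Subtype.val) ∧
      CycleFree (csrc (isrc src tgt W) (itgt src tgt W) (s.comap Subtype.val))
        (ctgt (isrc src tgt W) (itgt src tgt W) (s.comap Subtype.val)) ∧
      GIso (isrc (csrc src tgt s) (ctgt src tgt s)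
              {x : Quotient s | ∃ v ∈ W, Quotient.mk s v = x})
           (itgt (csrc src tgt s) (ctgt src tgt s)
              {x : Quotient s | ∃ v ∈ W, Quotient.mk s v = x})
           (csrc (isrc src tgt W) (itgt src tgt W) (s.comap Subtype.val))
           (ctgt (isrc src tgt W) (itgt src tgt W) (s.comap Subtype.val)) := by
  refine ⟨?_, ?_, ?_⟩
  · -- covering
    intro v a ha b hb
    -- ha : a ∈ {w | (s.comap val).r v w} i.e. s.r v.val a.val
    have ha' : s.r v.val a.val := ha
    have hb' : s.r v.val b.val := hb
    have key : ∀ (x y : V), s.r v.val x → Relation.ReflTransGen (UStepIn src tgt {w | s.r v.val w}) x y →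
        ∀ (hy : y ∈ W) (hx : x ∈ W) (hry : s.r v.val y),
        Relation.ReflTransGen (UStepIn (isrc src tgt W) (itgt src tgt W)
          {w : W | s.r v.val w.val}) ⟨x, hx⟩ ⟨y, hy⟩ := by
      intro x y hx h
      induction h with
      | refl => intro _ _ _; exact Relation.ReflTransGen.refl
      | tail hac hcb ih =>
        rename_i c b'
        intro hyW hxW _
        have hcP : s.r v.val c := hcb.1
        have hbP : s.r v.val b' := hcb.2.1
        have hcW : c ∈ W := (hW _ _ hcP).mp ((hW _ _ (Setoid.refl _)).mp ((hW _ _ hx).symm.mp hxW))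
        -- simpler: v.val ∈ W, then block ⊆ W
        refine Relation.ReflTransGen.tail (ih hcW hxW hcP) ?_
        obtain ⟨e, he⟩ := hcb.2.2
        have heW : src e ∈ W ∧ tgt e ∈ W := by
          rcases he with ⟨h1, h2⟩ | ⟨h1, h2⟩
          · exact ⟨h1 ▸ hcW, h2 ▸ hyW⟩
          · exact ⟨h1 ▸ hyW, h2 ▸ hcW⟩
        refine ⟨hcP, hbP, ⟨⟨e, heW⟩, ?_⟩⟩
        rcases he with ⟨h1, h2⟩ | ⟨h1, h2⟩
        · left; constructor <;> [exact Subtype.ext h1; exact Subtype.ext h2]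
        · right; constructor <;> [exact Subtype.ext h1; exact Subtype.ext h2]
    have := hs v.val a.val ha' b.val hb'
    have h := key a.val b.val ha' this b.2 a.2 hb'
    exact h
  · -- cycle free
    intro x hx
    set q : Quotient (s.comap (Subtype.val : W → V)) → Quotient s :=
      Quotient.lift (fun v : W => Quotient.mk s v.val)
        (fun a b hab => Quotient.sound hab) with hq
    have hstep : ∀ a b, Step (csrc (isrc src tgt W) (itgt src tgt W) (s.comap Subtype.val))
        (ctgt (isrc src tgt W) (itgt src tgt W) (s.comap Subtype.val)) a b →
        Step (csrc src tgt s) (ctgt src tgt s) (q a) (q b) := by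
      rintro a b ⟨⟨⟨e, heW⟩, hne⟩, h1, h2⟩
      refine ⟨⟨e, hne⟩, ?_, ?_⟩
      · rw [← h1]; rfl
      · rw [← h2]; rfl
    exact hpc (q x) (Relation.TransGen.lift q hstep x x hx)
  · -- iso
    classical
    set U : Set (Quotient s) := {x : Quotient s | ∃ v ∈ W, Quotient.mk s v = x} with hU
    set g : Quotient (s.comap (Subtype.val : W → V)) → U :=
      Quotient.lift (fun v : W => (⟨Quotient.mk s v.val, v.val, v.2, rfl⟩ : U))
        (fun a b hab => Subtype.ext (Quotient.sound hab)) with hg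
    have hgbij : Function.Bijective g := by
      constructor
      · rintro ⟨a⟩ ⟨b⟩ hab
        have : s.r a.val b.val := Quotient.exact (congrArg Subtype.val hab)
        exact Quotient.sound this
      · rintro ⟨x, v, hv, hx⟩
        exact ⟨Quotient.mk _ (⟨v, hv⟩ : W), Subtype.ext hx⟩
    have memW : ∀ v : V, Quotient.mk s v ∈ U → v ∈ W := by
      rintro v ⟨w, hw, hx⟩
      exact (hW _ _ (Quotient.exact hx)).mp hw
    refine ⟨(Equiv.ofBijective g hgbij).symm,
      ⟨fun e => ⟨⟨e.1.1, memW _ e.2.1, memW _ e.2.2⟩, e.1.2⟩,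
       fun e => ⟨⟨e.1.1, e.2⟩, ⟨src e.1.1, e.1.2.1, rfl⟩, ⟨tgt e.1.1, e.1.2.2, rfl⟩⟩,
       fun e => rfl, fun e => rfl⟩, ?_, ?_⟩
    · intro e
      rw [Equiv.symm_apply_eq]
      rfl
    · intro e
      rw [Equiv.symm_apply_eq]
      rfl

/-- if every block of the poset-compatible covering subgraph `s` is
contained in `V₁` or in `V₂` for an admissible cut `(V₁,V₂)`, then the
restriction of `s` to `Vᵢ` is a poset-compatible covering subgraph of `Γ(Vᵢ)`,
and `(Γ/s)(Uᵢ) ≅ Γ(Vᵢ)/(s ∩ Γ(Vᵢ))` where `Uᵢ` is the set of blocks inside `Vᵢ`. -/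
theorem stmt14 [Fintype V] [Fintype E] (src tgt : E → V) (h : CycleFree src tgt)
    (s : Setoid V) (hs : CoveringSetoid src tgt s)
    (hpc : CycleFree (csrc src tgt s) (ctgt src tgt s))
    (V1 V2 : Set V) (hcut : AdmCut src tgt V1 V2)
    (hblk : ∀ v w : V, s.r v w → (v ∈ V1 ↔ w ∈ V1)) :
    (CoveringSetoid (isrc src tgt V1) (itgt src tgt V1) (s.comap Subtype.val) ∧
      CycleFree (csrc (isrc src tgt V1) (itgt src tgt V1) (s.comap Subtype.val))
        (ctgt (isrc src tgt V1) (itgt src tgt V1) (s.comap Subtype.val)) ∧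
      GIso (isrc (csrc src tgt s) (ctgt src tgt s)
              {x : Quotient s | ∃ v ∈ V1, Quotient.mk s v = x})
           (itgt (csrc src tgt s) (ctgt src tgt s)
              {x : Quotient s | ∃ v ∈ V1, Quotient.mk s v = x})
           (csrc (isrc src tgt V1) (itgt src tgt V1) (s.comap Subtype.val))
           (ctgt (isrc src tgt V1) (itgt src tgt V1) (s.comap Subtype.val))) ∧
    (CoveringSetoid (isrc src tgt V2) (itgt src tgt V2) (s.comap Subtype.val) ∧
      CycleFree (csrc (isrc src tgt V2) (itgt src tgt V2) (s.comap Subtype.val))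
        (ctgt (isrc src tgt V2) (itgt src tgt V2) (s.comap Subtype.val)) ∧
      GIso (isrc (csrc src tgt s) (ctgt src tgt s)
              {x : Quotient s | ∃ v ∈ V2, Quotient.mk s v = x})
           (itgt (csrc src tgt s) (ctgt src tgt s)
              {x : Quotient s | ∃ v ∈ V2, Quotient.mk s v = x})
           (csrc (isrc src tgt V2) (itgt src tgt V2) (s.comap Subtype.val))
           (ctgt (isrc src tgt V2) (itgt src tgt V2) (s.comap Subtype.val))) := by
  obtain ⟨hdisj, huniv, _⟩ := hcut
  have hW2 : ∀ v w : V, s.r v w → (v ∈ V2 ↔ w ∈ V2) := by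
    intro v w hvw
    have h1 := hblk v w hvw
    constructor
    · intro hv
      rcases (huniv ▸ Set.mem_univ w : w ∈ V1 ∪ V2) with hw1 | hw2
      · exact absurd hv (Set.disjoint_left.mp hdisj (h1.mpr hw1))
      · exact hw2
    · intro hw
      rcases (huniv ▸ Set.mem_univ v : v ∈ V1 ∪ V2) with hv1 | hv2
      · exact absurd hw (Set.disjoint_left.mp hdisj (h1.mp hv1))
      · exact hv2
  exact ⟨aux_main src tgt s hs hpc V1 hblk, aux_main src tgt s hs hpc V2 hW2⟩
end
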